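/- The operator $B : \mathcal{H}_N \to L^2_{1/\rho_0}$ defined by $(B\Phi)(r) = N\int \overline{\Psi_0(r,\tilde r)}\Phi(r,\tilde r) d\tilde r - \langle \Psi_0, \Phi\rangle \rho_0(r)$ is bounded with operator norm at most $N$, where $L^2_{1/\rho_0}$ is the $L^2$ space on $\mathrm{supp}(\rho_0)$ with weight $\rho_0^{-1}$. -/

import Mathlib

open MeasureTheory Complex ENNReal

section Aux
variable {Ω T : Type*} [MeasurableSpace Ω] [MeasurableSpace T]

lemma my_tonelli_meas (μ : Measure Ω) (ν : Measure T)
    (hm : AEMeasurable (fun x : Ω => ν.map (Prod.mk x)) μ)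
    {f : Ω × T → ℝ≥0∞} (hf : Measurable f) :
    ∫⁻ z, f z ∂(μ.prod ν) = ∫⁻ x, ∫⁻ y, f (x, y) ∂ν ∂μ := by
  have h1 : μ.prod ν = μ.bind (hm.mk _) := by
    rw [Measure.prod_def, Measure.bind, Measure.bind, Measure.map_congr hm.ae_eq_mk]
  rw [h1, Measure.lintegral_bind hm.measurable_mk.aemeasurable hf.aemeasurable]
  refine lintegral_congr_ae ?_
  filter_upwards [hm.ae_eq_mk] with x hx
  rw [← hx, lintegral_map hf measurable_prodMk_left]

lemma my_slice_aemeasurable (μ : Measure Ω) (ν : Measure T)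
    (hm : AEMeasurable (fun x : Ω => ν.map (Prod.mk x)) μ)
    {f : Ω × T → ℝ≥0∞} (hf : Measurable f) :
    AEMeasurable (fun x => ∫⁻ y, f (x, y) ∂ν) μ := by
  refine ⟨fun x => ∫⁻ z, f z ∂(hm.mk _ x),
    (Measure.measurable_lintegral hf).comp hm.measurable_mk, ?_⟩
  filter_upwards [hm.ae_eq_mk] with x hx
  rw [← hx, lintegral_map hf measurable_prodMk_left]

lemma my_ae_slice (μ : Measure Ω) (ν : Measure T)
    (hm : AEMeasurable (fun x : Ω => ν.map (Prod.mk x)) μ)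
    {p : Ω × T → Prop} (hp : ∀ᵐ z ∂(μ.prod ν), p z) :
    ∀ᵐ x ∂μ, ∀ᵐ y ∂ν, p (x, y) := by
  set s := toMeasurable (μ.prod ν) {z | ¬ p z} with hs
  have hsm : MeasurableSet s := measurableSet_toMeasurable _ _
  have hs0 : μ.prod ν s = 0 := by rw [hs, measure_toMeasurable]; exact hp
  have h := my_tonelli_meas μ ν hm (f := s.indicator 1) (measurable_one.indicator hsm)
  rw [lintegral_indicator hsm] at h
  simp only [Pi.one_apply, setLIntegral_one, hs0] at h
  have h2 : ∀ᵐ x ∂μ, ∫⁻ y, s.indicator 1 (x, y) ∂ν = 0 := by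
    have := my_slice_aemeasurable μ ν hm (f := s.indicator 1)
      (measurable_one.indicator hsm)
    exact (lintegral_eq_zero_iff' this).mp h.symm
  filter_upwards [h2] with x hx
  have hxm : Measurable fun y => s.indicator (1 : Ω × T → ℝ≥0∞) (x, y) :=
    (measurable_one.indicator hsm).comp measurable_prodMk_left
  have := (lintegral_eq_zero_iff hxm).mp hx
  filter_upwards [this] with y hy
  by_contra hpy
  have : (x, y) ∈ s := subset_toMeasurable _ _ hpy
  simp [Set.indicator_of_mem this] at hy

lemma my_lintegral_sq_eq {α : Type*} [MeasurableSpace α] {m : Measure α} (f : α → ℂ) :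
    ∫⁻ x, (‖f x‖₊ : ℝ≥0∞) ^ 2 ∂m = (eLpNorm f 2 m) ^ 2 := by
  rw [eLpNorm_eq_lintegral_rpow_enorm_toReal two_ne_zero ENNReal.ofNat_ne_top]
  rw [← ENNReal.rpow_natCast _ 2, ← ENNReal.rpow_mul]
  norm_num
  rfl

/-- a.e. slices of an `L²` function on a product are `L²`, with the natural slice
`lintegral` identity available. -/
lemma my_slice_memℒp (μ : Measure Ω) (ν : Measure T)
    (hm : AEMeasurable (fun x : Ω => ν.map (Prod.mk x)) μ)
    {f : Ω × T → ℂ} (hf : MemLp f 2 (μ.prod ν)) :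
    ∀ᵐ x ∂μ, MemLp (fun y => f (x, y)) 2 ν := by
  set g := hf.1.mk f with hg
  have hgm : StronglyMeasurable g := hf.1.stronglyMeasurable_mk
  have hsq : Measurable fun z => (‖g z‖₊ : ℝ≥0∞) ^ 2 :=
    (hgm.measurable.nnnorm.coe_nnreal_ennreal).pow_const 2
  have hfin : ∫⁻ x, ∫⁻ y, (‖g (x, y)‖₊ : ℝ≥0∞) ^ 2 ∂ν ∂μ ≠ ⊤ := by
    rw [← my_tonelli_meas μ ν hm hsq]
    have : ∫⁻ z, (‖g z‖₊ : ℝ≥0∞) ^ 2 ∂(μ.prod ν) = ∫⁻ z, (‖f z‖₊ : ℝ≥0∞) ^ 2 ∂(μ.prod ν) := by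
      refine lintegral_congr_ae ?_
      filter_upwards [hf.1.ae_eq_mk] with z hz
      rw [hz]
    rw [this, my_lintegral_sq_eq]
    exact (ENNReal.pow_lt_top hf.2).ne
  have hlt : ∀ᵐ x ∂μ, ∫⁻ y, (‖g (x, y)‖₊ : ℝ≥0∞) ^ 2 ∂ν < ⊤ :=
    ae_lt_top' (my_slice_aemeasurable μ ν hm hsq) hfin
  have hae : ∀ᵐ x ∂μ, ∀ᵐ y ∂ν, f (x, y) = g (x, y) := my_ae_slice μ ν hm hf.1.ae_eq_mk
  filter_upwards [hlt, hae] with x hx hxae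
  have hgs : MemLp (fun y => g (x, y)) 2 ν := by
    refine ⟨(hgm.comp_measurable measurable_prodMk_left).aestronglyMeasurable, ?_⟩
    have := my_lintegral_sq_eq (m := ν) (fun y => g (x, y))
    rw [this] at hx
    by_contra h
    rw [not_lt, top_le_iff] at h
    rw [h] at hx
    exact absurd hx (by simp)
  have hxae' : (fun y => f (x, y)) =ᵐ[ν] fun y => g (x, y) := hxae
  exact hgs.ae_eq hxae'.symm
lemma my_int_mul {f g : α → ℂ} (hf : MemLp f 2 m) (hg : MemLp g 2 m) :
    Integrable (fun x => (starRingEnd ℂ) (f x) * g x) m := by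
  have h := L2.integrable_inner (𝕜 := ℂ) (hf.toLp f) (hg.toLp g)
  refine h.congr ?_
  filter_upwards [hf.coeFn_toLp, hg.coeFn_toLp] with x hx hy
  rw [RCLike.inner_apply, hx, hy, mul_comm]

local notation "⟪" x ", " y "⟫" => @inner ℂ _ _ x y

lemma my_ortho {f g : α → ℂ} (hf : MemLp f 2 m) (hg : MemLp g 2 m)
    (hfn : ∫ x, ‖f x‖ ^ 2 ∂m = 1) :
    ∫⁻ x, (‖g x - (∫ a, (starRingEnd ℂ) (f a) * g a ∂m) * f x‖₊ : ℝ≥0∞) ^ 2 ∂m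
      ≤ ∫⁻ x, (‖g x‖₊ : ℝ≥0∞) ^ 2 ∂m := by
  set S : ℂ := ∫ a, (starRingEnd ℂ) (f a) * g a ∂m with hS
  set F : Lp ℂ 2 m := hf.toLp f
  set G : Lp ℂ 2 m := hg.toLp g
  have hFG : (⟪F, G⟫ : ℂ) = S := by
    rw [L2.inner_def]
    refine integral_congr_ae ?_
    filter_upwards [hf.coeFn_toLp, hg.coeFn_toLp] with x hx hy
    rw [RCLike.inner_apply, hx, hy, mul_comm]
  have hFn : ‖F‖ = 1 := by
    have hint := L2.integrable_inner (𝕜 := ℂ) F F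
    have h1 : ‖F‖ ^ 2 = RCLike.re (⟪F, F⟫) := (inner_self_eq_norm_sq F).symm
    have h2 : RCLike.re (⟪F, F⟫) = ∫ a, RCLike.re (⟪(F a : ℂ), (F a : ℂ)⟫) ∂m := by
      rw [L2.inner_def, integral_re hint]
    have h3 : ∫ a, RCLike.re (⟪(F a : ℂ), (F a : ℂ)⟫) ∂m = ∫ x, ‖f x‖ ^ 2 ∂m := by
      refine integral_congr_ae ?_
      filter_upwards [hf.coeFn_toLp] with x hx
      rw [RCLike.inner_apply, hx, Complex.mul_conj']
      norm_cast
    have h : ‖F‖ ^ 2 = 1 := by rw [h1, h2, h3, hfn]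
    have h' : (‖F‖ - 1) * (‖F‖ + 1) = 0 := by nlinarith [h]
    rcases mul_eq_zero.mp h' with h'' | h''
    · linarith
    · linarith [norm_nonneg F]
  -- the function g - S f corresponds to G - S • F
  have hcoe : (fun x => g x - S * f x) =ᵐ[m] ⇑(G - S • F) := by
    filter_upwards [hf.coeFn_toLp, hg.coeFn_toLp, Lp.coeFn_sub G (S • F),
      Lp.coeFn_smul S F] with x hx hy hsub hsmul
    rw [hsub, Pi.sub_apply, hsmul, Pi.smul_apply, smul_eq_mul, hx, hy]
  have hkey : ‖G - S • F‖ ≤ ‖G‖ := by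
    have hexp : ‖G - S • F‖ ^ 2 = ‖G‖ ^ 2 - ‖S‖ ^ 2 := by
      rw [norm_sub_sq (𝕜 := ℂ)]
      have h1 : (⟪G, S • F⟫ : ℂ) = S * (starRingEnd ℂ) S := by
        rw [inner_smul_right, ← inner_conj_symm, hFG]
      have h2 : RCLike.re (⟪G, S • F⟫) = ‖S‖ ^ 2 := by
        rw [h1, Complex.mul_conj']
        norm_cast
      rw [h2, norm_smul, hFn]
      simp only [mul_one]
      ring
    nlinarith [hexp, norm_nonneg (G - S • F), norm_nonneg G, sq_nonneg ‖S‖]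
  calc ∫⁻ x, (‖g x - S * f x‖₊ : ℝ≥0∞) ^ 2 ∂m
      = (eLpNorm (fun x => g x - S * f x) 2 m) ^ 2 := my_lintegral_sq_eq _
    _ = (eLpNorm (⇑(G - S • F)) 2 m) ^ 2 := by rw [eLpNorm_congr_ae hcoe]
    _ ≤ (eLpNorm (⇑G) 2 m) ^ 2 := by
        gcongr
        rw [← ofReal_toReal (Lp.eLpNorm_ne_top (G - S • F)),
          ← ofReal_toReal (Lp.eLpNorm_ne_top G)]
        exact ENNReal.ofReal_le_ofReal (by simpa [Lp.norm_def] using hkey)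
    _ = (eLpNorm g 2 m) ^ 2 := by rw [eLpNorm_congr_ae hg.coeFn_toLp]
    _ = ∫⁻ x, (‖g x‖₊ : ℝ≥0∞) ^ 2 ∂m := (my_lintegral_sq_eq _).symm

lemma my_ofReal_norm_sq_integral {α : Type*} [MeasurableSpace α] {m : Measure α}
    {f : α → ℂ} (hf : MemLp f 2 m) :
    ENNReal.ofReal (∫ x, ‖f x‖ ^ 2 ∂m) = ∫⁻ x, (‖f x‖₊ : ℝ≥0∞) ^ 2 ∂m := by
  have hint : Integrable (fun x => ‖f x‖ ^ 2) m := by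
    have := hf.integrable_norm_rpow two_ne_zero ENNReal.ofNat_ne_top
    simp only [ENNReal.toReal_ofNat] at this
    refine this.congr (Filter.Eventually.of_forall fun x => ?_)
    show ‖f x‖ ^ (2:ℝ) = ‖f x‖ ^ (2:ℕ)
    rw [← Real.rpow_natCast (‖f x‖) 2]; norm_num
  rw [ofReal_integral_eq_lintegral_ofReal hint
    (Filter.Eventually.of_forall fun x => sq_nonneg _)]
  congr 1; ext x
  rw [ENNReal.ofReal_pow (norm_nonneg _), ofReal_norm, enorm_eq_nnnorm]

lemma my_slice_bound (ν : Measure T) {f g : T → ℂ} (hf : MemLp f 2 ν) (hg : MemLp g 2 ν)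
    (N : ℕ) :
    (‖(N : ℂ) * ∫ y, (starRingEnd ℂ) (f y) * g y ∂ν‖₊ : ℝ≥0∞) ^ 2
        * (ENNReal.ofReal ((N : ℝ) * ∫ y, ‖f y‖ ^ 2 ∂ν))⁻¹
      ≤ (N : ℝ≥0∞) * ∫⁻ y, (‖g y‖₊ : ℝ≥0∞) ^ 2 ∂ν := by
  set A := ∫⁻ y, (‖f y‖₊ : ℝ≥0∞) ^ 2 ∂ν with hA
  set B := ∫⁻ y, (‖g y‖₊ : ℝ≥0∞) ^ 2 ∂ν with hB
  have hAtop : A ≠ ⊤ := by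
    rw [hA, my_lintegral_sq_eq]
    exact (ENNReal.pow_lt_top hf.2).ne
  rcases Nat.eq_zero_or_pos N with hN | hN
  · subst hN; simp
  have hNne : (N : ℝ≥0∞) ≠ 0 := Nat.cast_ne_zero.mpr hN.ne'
  have hNtop : (N : ℝ≥0∞) ≠ ⊤ := ENNReal.natCast_ne_top N
  -- rewrite the weight
  have hw : ENNReal.ofReal ((N : ℝ) * ∫ y, ‖f y‖ ^ 2 ∂ν) = (N : ℝ≥0∞) * A := by
    rw [ENNReal.ofReal_mul (by positivity), ENNReal.ofReal_natCast,
      my_ofReal_norm_sq_integral hf]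
  -- norm of the constant
  have hnorm : (‖(N : ℂ) * ∫ y, (starRingEnd ℂ) (f y) * g y ∂ν‖₊ : ℝ≥0∞)
      = (N : ℝ≥0∞) * (‖∫ y, (starRingEnd ℂ) (f y) * g y ∂ν‖₊ : ℝ≥0∞) := by
    rw [nnnorm_mul, ENNReal.coe_mul]
    congr 1
    simp
  set c : ℝ≥0∞ := (‖∫ y, (starRingEnd ℂ) (f y) * g y ∂ν‖₊ : ℝ≥0∞) with hc
  rw [hnorm, hw]
  -- Cauchy-Schwarz : c ^ 2 ≤ A * B
  have hCS : c ^ 2 ≤ A * B := by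
    have h1 : c ≤ ∫⁻ y, (‖f y‖₊ : ℝ≥0∞) * (‖g y‖₊ : ℝ≥0∞) ∂ν := by
      refine (enorm_integral_le_lintegral_enorm _).trans (le_of_eq ?_)
      refine lintegral_congr fun y => ?_
      rw [enorm_eq_nnnorm, nnnorm_mul, ENNReal.coe_mul, RCLike.nnnorm_conj]
    have h2 : ∫⁻ y, (‖f y‖₊ : ℝ≥0∞) * (‖g y‖₊ : ℝ≥0∞) ∂ν
        ≤ A ^ (1/2 : ℝ) * B ^ (1/2 : ℝ) := by
      have hconj : Real.HolderConjugate 2 2 := by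
        rw [Real.holderConjugate_iff]; norm_num
      have h := ENNReal.lintegral_mul_le_Lp_mul_Lq ν hconj hf.1.enorm hg.1.enorm
      refine le_trans (le_of_eq ?_) (h.trans (le_of_eq ?_))
      · rfl
      · rw [hA, hB]
        congr 1
        · congr 1
          · refine lintegral_congr fun y => ?_
            rw [← ENNReal.rpow_natCast]
            norm_num
            rfl
        · congr 1
          refine lintegral_congr fun y => ?_
          rw [← ENNReal.rpow_natCast]
          norm_num
          rfl
    calc c ^ 2 ≤ (A ^ (1/2 : ℝ) * B ^ (1/2 : ℝ)) ^ 2 := by gcongr; exact h1.trans h2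
      _ = A * B := by
        rw [mul_pow, ← ENNReal.rpow_natCast (A ^ (1/2:ℝ)), ← ENNReal.rpow_natCast (B ^ (1/2:ℝ)),
          ← ENNReal.rpow_mul, ← ENNReal.rpow_mul]
        norm_num
  rcases eq_or_ne A 0 with hA0 | hA0
  · -- f vanishes a.e., so c = 0
    have hc0 : c = 0 := by
      have hB0 : c ^ 2 ≤ 0 := by rw [hA0, zero_mul] at hCS; exact hCS
      exact (pow_eq_zero_iff two_ne_zero).mp (le_antisymm hB0 zero_le)
    rw [hc0]
    simp
  · calc ((N : ℝ≥0∞) * c) ^ 2 * ((N : ℝ≥0∞) * A)⁻¹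
        ≤ (N : ℝ≥0∞) ^ 2 * (A * B) * ((N : ℝ≥0∞)⁻¹ * A⁻¹) := by
          rw [mul_pow, ENNReal.mul_inv (Or.inl hNne) (Or.inl hNtop)]
          gcongr
      _ = ((N : ℝ≥0∞) ^ 2 * (N : ℝ≥0∞)⁻¹) * (A * A⁻¹) * B := by ring
      _ = (N : ℝ≥0∞) * B := by
          have hNN : (N : ℝ≥0∞) ^ 2 * (N : ℝ≥0∞)⁻¹ = (N : ℝ≥0∞) := by
            rw [pow_two, mul_assoc, ENNReal.mul_inv_cancel hNne hNtop, mul_one]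
          rw [ENNReal.mul_inv_cancel hA0 hAtop, mul_one, hNN]

lemma my_tonelli_sq {Ω T : Type*} [MeasurableSpace Ω] [MeasurableSpace T]
    (μ : Measure Ω) (ν : Measure T)
    (hm : AEMeasurable (fun x : Ω => ν.map (Prod.mk x)) μ)
    {f : Ω × T → ℂ} (hf : AEStronglyMeasurable f (μ.prod ν)) :
    ∫⁻ x, ∫⁻ y, (‖f (x, y)‖₊ : ℝ≥0∞) ^ 2 ∂ν ∂μ
      = ∫⁻ z, (‖f z‖₊ : ℝ≥0∞) ^ 2 ∂(μ.prod ν) := by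
  set g := hf.mk f with hg
  have hgm : StronglyMeasurable g := hf.stronglyMeasurable_mk
  have hsq : Measurable fun z => (‖g z‖₊ : ℝ≥0∞) ^ 2 :=
    (hgm.measurable.nnnorm.coe_nnreal_ennreal).pow_const 2
  have h1 : ∫⁻ z, (‖f z‖₊ : ℝ≥0∞) ^ 2 ∂(μ.prod ν)
      = ∫⁻ z, (‖g z‖₊ : ℝ≥0∞) ^ 2 ∂(μ.prod ν) := by
    refine lintegral_congr_ae ?_
    filter_upwards [hf.ae_eq_mk] with z hz
    rw [hz]
  rw [h1, my_tonelli_meas μ ν hm hsq]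
  refine lintegral_congr_ae ?_
  filter_upwards [my_ae_slice μ ν hm hf.ae_eq_mk] with x hx
  refine lintegral_congr_ae ?_
  filter_upwards [hx] with y hy
  rw [hy]

end Aux

/-- The operator `B : 𝓗_N → L²_{1/ρ0}`,
`(BΦ)(r) = N ∫ conj Ψ0(r,·) Φ(r,·) − ⟨Ψ0, Φ⟩ ρ0(r)`, is bounded with operator norm at
most `N`, expressed as `‖BΦ‖²_{L²_{1/ρ0}} ≤ N² ‖Φ‖²_{𝓗_N}`.  The `N`-body space is
modelled as `L²(Ω × T)` with `T` abstracting the last `N−1` coordinates, and the weight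
`1/ρ0` (infinite off `supp ρ0`) is implemented by `(ENNReal.ofReal (ρ0 r))⁻¹`. -/
theorem stmt1
    {Ω T : Type*} [MeasurableSpace Ω] [MeasurableSpace T]
    (μ : Measure Ω) (ν : Measure T) (N : ℕ)
    (Ψ0 : Ω × T → ℂ) (hΨ0 : MemLp Ψ0 2 (μ.prod ν))
    (hΨ0norm : ∫ p, ‖Ψ0 p‖ ^ 2 ∂(μ.prod ν) = 1)
    (ρ0 : Ω → ℝ)
    (hρ0 : ∀ᵐ r ∂μ, ρ0 r = N * ∫ y, ‖Ψ0 (r, y)‖ ^ 2 ∂ν)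
    (Φ : Ω × T → ℂ) (hΦ : MemLp Φ 2 (μ.prod ν)) :
    ∫⁻ r, (‖(N : ℂ) * (∫ y, (starRingEnd ℂ) (Ψ0 (r, y)) * Φ (r, y) ∂ν)
            - (∫ p, (starRingEnd ℂ) (Ψ0 p) * Φ p ∂(μ.prod ν)) * (ρ0 r : ℂ)‖₊ : ℝ≥0∞) ^ 2
          * (ENNReal.ofReal (ρ0 r))⁻¹ ∂μ
      ≤ (N : ℝ≥0∞) ^ 2 * ∫⁻ p, (‖Φ p‖₊ : ℝ≥0∞) ^ 2 ∂(μ.prod ν) := by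
  by_cases hm : AEMeasurable (fun x : Ω => ν.map (Prod.mk x)) μ
  swap
  · exfalso
    have hz : μ.prod ν = 0 := by
      rw [Measure.prod_def, Measure.bind, Measure.map_of_not_aemeasurable hm, Measure.join_zero]
    rw [hz] at hΨ0norm
    simp at hΨ0norm
  set S : ℂ := ∫ p, (starRingEnd ℂ) (Ψ0 p) * Φ p ∂(μ.prod ν) with hSdef
  have hΦ' : MemLp (fun p => Φ p - S * Ψ0 p) 2 (μ.prod ν) := hΦ.sub (hΨ0.const_mul S)
  have key : ∀ᵐ r ∂μ,
      (‖(N : ℂ) * (∫ y, (starRingEnd ℂ) (Ψ0 (r, y)) * Φ (r, y) ∂ν)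
          - S * (ρ0 r : ℂ)‖₊ : ℝ≥0∞) ^ 2 * (ENNReal.ofReal (ρ0 r))⁻¹
        ≤ (N : ℝ≥0∞) * ∫⁻ y, (‖Φ (r, y) - S * Ψ0 (r, y)‖₊ : ℝ≥0∞) ^ 2 ∂ν := by
    filter_upwards [hρ0, my_slice_memℒp μ ν hm hΨ0, my_slice_memℒp μ ν hm hΦ]
      with r h1 h2 h3
    have hgs : MemLp (fun y => Φ (r, y) - S * Ψ0 (r, y)) 2 ν := h3.sub (h2.const_mul S)
    have hint1 := my_int_mul h2 h3
    have hint2 := my_int_mul h2 h2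
    have e2 : ∫ y, (starRingEnd ℂ) (Ψ0 (r, y)) * Ψ0 (r, y) ∂ν
        = ((∫ y, ‖Ψ0 (r, y)‖ ^ 2 ∂ν : ℝ) : ℂ) := by
      rw [show ((∫ y, ‖Ψ0 (r, y)‖ ^ 2 ∂ν : ℝ) : ℂ)
          = (RCLike.ofReal (K := ℂ) (∫ y, ‖Ψ0 (r, y)‖ ^ 2 ∂ν)) from rfl,
        ← integral_ofReal]
      refine integral_congr_ae (Filter.Eventually.of_forall fun y => ?_)
      show (starRingEnd ℂ) (Ψ0 (r, y)) * Ψ0 (r, y) = ((‖Ψ0 (r, y)‖ ^ 2 : ℝ) : ℂ)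
      rw [Complex.conj_mul']
      norm_cast
    have e1 : ∫ y, (starRingEnd ℂ) (Ψ0 (r, y)) * (Φ (r, y) - S * Ψ0 (r, y)) ∂ν
        = (∫ y, (starRingEnd ℂ) (Ψ0 (r, y)) * Φ (r, y) ∂ν)
          - S * ∫ y, (starRingEnd ℂ) (Ψ0 (r, y)) * Ψ0 (r, y) ∂ν := by
      have : (fun y => (starRingEnd ℂ) (Ψ0 (r, y)) * (Φ (r, y) - S * Ψ0 (r, y)))
          = fun y => (starRingEnd ℂ) (Ψ0 (r, y)) * Φ (r, y)
              - S * ((starRingEnd ℂ) (Ψ0 (r, y)) * Ψ0 (r, y)) := by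
        funext y; ring
      rw [this, integral_sub hint1 (hint2.const_mul S), integral_const_mul]
    have hid : (N : ℂ) * (∫ y, (starRingEnd ℂ) (Ψ0 (r, y)) * Φ (r, y) ∂ν) - S * (ρ0 r : ℂ)
        = (N : ℂ) * ∫ y, (starRingEnd ℂ) (Ψ0 (r, y)) * (Φ (r, y) - S * Ψ0 (r, y)) ∂ν := by
      rw [e1, e2, h1]
      push_cast
      ring
    rw [hid, h1]
    exact my_slice_bound ν h2 hgs N
  calc ∫⁻ r, (‖(N : ℂ) * (∫ y, (starRingEnd ℂ) (Ψ0 (r, y)) * Φ (r, y) ∂ν)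
            - S * (ρ0 r : ℂ)‖₊ : ℝ≥0∞) ^ 2 * (ENNReal.ofReal (ρ0 r))⁻¹ ∂μ
      ≤ ∫⁻ r, (N : ℝ≥0∞) * ∫⁻ y, (‖Φ (r, y) - S * Ψ0 (r, y)‖₊ : ℝ≥0∞) ^ 2 ∂ν ∂μ :=
        lintegral_mono_ae key
    _ = (N : ℝ≥0∞) * ∫⁻ r, ∫⁻ y, (‖Φ (r, y) - S * Ψ0 (r, y)‖₊ : ℝ≥0∞) ^ 2 ∂ν ∂μ :=
        lintegral_const_mul' _ _ (ENNReal.natCast_ne_top N)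
    _ = (N : ℝ≥0∞) * ∫⁻ p, (‖Φ p - S * Ψ0 p‖₊ : ℝ≥0∞) ^ 2 ∂(μ.prod ν) := by
        rw [my_tonelli_sq μ ν hm hΦ'.1]
    _ ≤ (N : ℝ≥0∞) * ∫⁻ p, (‖Φ p‖₊ : ℝ≥0∞) ^ 2 ∂(μ.prod ν) :=
        mul_le_mul_right (my_ortho hΨ0 hΦ hΨ0norm) _
    _ ≤ (N : ℝ≥0∞) ^ 2 * ∫⁻ p, (‖Φ p‖₊ : ℝ≥0∞) ^ 2 ∂(μ.prod ν) := by
        gcongr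
        rcases Nat.eq_zero_or_pos N with h | h
        · subst h; simp
        · exact le_self_pow₀ (by exact_mod_cast Nat.one_le_cast.mpr h) two_ne_zero
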